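/- Fix θ, ξ ∈ ℝ and let C_{θ,ξ} be the conjugation on ℓ²(ℕ, ℂ) defined coefficientwise by (C_{θ,ξ} a)_n = e^{iξ} e^{−inθ} conj(a_n) (corresponding to (C_{θ,ξ} f)(z) = e^{iξ} conj(f(e^{iθ} z̄)) on H²(𝔻)). Let T be a Toeplitz operator on ℓ²(ℕ, ℂ) with symbol coefficients φ_k (k ∈ ℤ). Then T is C_{θ,ξ}-symmetric (C_{θ,ξ} T* C_{θ,ξ} = T) if and only if e^{inθ} φ_n = φ_{−n} for all n ∈ ℤ. -/

import Mathlib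

noncomputable section
open scoped ComplexConjugate
open ContinuousLinearMap

/-- A conjugation on a complex Hilbert space: an antilinear, involutive, isometric map. -/
def IsConjugation {E : Type*} [NormedAddCommGroup E] [InnerProductSpace ℂ E] (C : E → E) : Prop :=
  (∀ (a : ℂ) (f g : E), C (a • f + g) = conj a • C f + C g) ∧
  (∀ f, C (C f) = f) ∧
  (∀ f, ‖C f‖ = ‖f‖)

/-- The inner product in the paper's convention: linear in the first argument and
conjugate-linear in the second (Mathlib's `inner` with the arguments swapped). -/
def ip {E : Type*} [NormedAddCommGroup E] [InnerProductSpace ℂ E] (x y : E) : ℂ :=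
  inner ℂ y x

/-- `ℓ²(ℕ, ℂ)`, identified with the Hardy space `H²(𝔻)` via Taylor coefficients. -/
abbrev Ell2 : Type := lp (fun _ : ℕ => ℂ) 2

/-- The standard orthonormal basis of `ℓ²(ℕ, ℂ)`. -/
def e (n : ℕ) : Ell2 := lp.single 2 n 1

/-- The coefficient multiplier of the conjugation `C_{θ,ξ}`. -/
def cc (θ ξ : ℝ) (n : ℕ) : ℂ :=
  Complex.exp ((ξ : ℂ) * Complex.I) * Complex.exp (-((n : ℂ) * (θ : ℂ)) * Complex.I)

lemma conj_cc (θ ξ : ℝ) (n : ℕ) :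
    conj (cc θ ξ n) = Complex.exp (-(ξ : ℂ) * Complex.I) *
      Complex.exp (((n : ℂ) * (θ : ℂ)) * Complex.I) := by
  unfold cc
  rw [map_mul, ← Complex.exp_conj, ← Complex.exp_conj]
  congr 2 <;> simp [map_mul, Complex.conj_I, Complex.conj_ofReal]

lemma cc_mul_conj (θ ξ : ℝ) (m n : ℕ) :
    cc θ ξ m * conj (cc θ ξ n) =
      Complex.exp ((((n : ℂ) - (m : ℂ))) * (θ : ℂ) * Complex.I) := by
  rw [conj_cc]
  unfold cc
  rw [mul_mul_mul_comm, ← Complex.exp_add, ← Complex.exp_add, ← Complex.exp_add]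
  congr 1
  ring

lemma cc_rel (θ ξ : ℝ) (m n : ℕ) :
    cc θ ξ n * Complex.exp ((((n : ℂ) - (m : ℂ))) * (θ : ℂ) * Complex.I) = cc θ ξ m := by
  unfold cc
  rw [mul_assoc, ← Complex.exp_add]
  congr 2
  ring

/-- **Ko–Lee.** Let `C_{θ,ξ}` be the conjugation on `ℓ²(ℕ, ℂ)` given
coefficientwise by `(C a)_n = e^{iξ} e^{-inθ} conj(a_n)`, and let `T` be a Toeplitz operator
with symbol coefficients `φ_k`.  Then `T` is `C_{θ,ξ}`-symmetric if and only if
`e^{inθ} φ_n = φ_{-n}` for all `n ∈ ℤ`. -/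
theorem c_theta_xi_symmetric_iff
    (θ ξ : ℝ) (C : Ell2 → Ell2) (hC : IsConjugation C)
    (hCdef : ∀ (a : Ell2) (n : ℕ),
      C a n = Complex.exp ((ξ : ℂ) * Complex.I) *
        Complex.exp (-((n : ℂ) * (θ : ℂ)) * Complex.I) * conj (a n))
    (S₀ T : Ell2 →L[ℂ] Ell2) (hS₀ : ∀ n, S₀ (e n) = e (n + 1))
    (hT : (adjoint S₀).comp (T.comp S₀) = T)
    (φ : ℤ → ℂ) (hφ : ∀ m n : ℕ, φ ((m : ℤ) - (n : ℤ)) = ip (T (e n)) (e m)) :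
    (∀ x, C (adjoint T (C x)) = T x) ↔
      ∀ n : ℤ, Complex.exp ((n : ℂ) * (θ : ℂ) * Complex.I) * φ n = φ (-n) := by
  obtain ⟨hCl, hCinv, hCnorm⟩ := hC
  -- basic facts about C
  have hCadd : ∀ f g, C (f + g) = C f + C g := by
    intro f g; simpa using hCl 1 f g
  have hC0 : C 0 = 0 := by
    have h : C 0 = C 0 + C 0 := by simpa using hCl 1 0 0
    have h' : C 0 + 0 = C 0 + C 0 := by rw [add_zero]; exact h
    exact (add_left_cancel h').symm
  have hCsmul : ∀ (a : ℂ) (f : Ell2), C (a • f) = conj a • C f := by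
    intro a f
    have := hCl a f 0
    simpa [hC0] using this
  have hCsub : ∀ f g, C (f - g) = C f - C g := by
    intro f g
    have h := hCadd (f - g) g
    rw [sub_add_cancel] at h
    rw [h]; abel
  have hCcont : Continuous C := by
    have : Isometry C := Isometry.of_dist_eq fun f g => by
      rw [dist_eq_norm, dist_eq_norm, ← hCsub, hCnorm]
    exact this.continuous
  -- coefficient extraction
  have hCc : ∀ (a : Ell2) (n : ℕ), C a n = cc θ ξ n * conj (a n) := by
    intro a n
    rw [hCdef]; unfold cc; ring
  have hcoeff : ∀ (x : Ell2) (m : ℕ), (inner ℂ (e m) x : ℂ) = x m := by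
    intro x m
    rw [e, lp.inner_single_left]
    simp [RCLike.inner_apply]
  have hTe : ∀ m n : ℕ, (T (e n)) m = φ ((m : ℤ) - (n : ℤ)) := by
    intro m n
    rw [hφ]
    unfold ip
    exact (hcoeff _ _).symm
  have hadjTe : ∀ m n : ℕ, (adjoint T (e n)) m = conj (φ ((n : ℤ) - (m : ℤ))) := by
    intro m n
    rw [← hcoeff, ContinuousLinearMap.adjoint_inner_right, ← inner_conj_symm, hcoeff, hTe]
  have hen : ∀ n : ℕ, (e n : ∀ _ : ℕ, ℂ) n = 1 := fun n => lp.single_apply_self 2 n 1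
  have hCe : ∀ n, C (e n) = cc θ ξ n • e n := by
    intro n
    apply lp.ext; funext m
    have hsm : ((cc θ ξ n • e n : Ell2) : ∀ _ : ℕ, ℂ) m = cc θ ξ n * (e n) m := by
      rw [lp.coeFn_smul]; rfl
    rw [hCc, hsm]
    by_cases h : m = n
    · subst h; rw [hen]; simp
    · rw [e, lp.single_apply_ne 2 n 1 h]; simp
  -- coefficient of C (adjoint T (C (e n)))
  have hmain : ∀ m n : ℕ, (C (adjoint T (C (e n)))) m =
      Complex.exp ((((n : ℂ) - (m : ℂ))) * (θ : ℂ) * Complex.I) * φ ((n : ℤ) - (m : ℤ)) := by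
    intro m n
    rw [hCc, hCe, map_smul]
    have hsm : ((cc θ ξ n • adjoint T (e n) : Ell2) : ∀ _ : ℕ, ℂ) m
        = cc θ ξ n * (adjoint T (e n)) m := by rw [lp.coeFn_smul]; rfl
    rw [hsm, hadjTe]
    rw [map_mul, Complex.conj_conj, ← mul_assoc, cc_mul_conj]
  constructor
  · -- forward
    intro H k
    obtain ⟨n, m, hk⟩ : ∃ n m : ℕ, (n : ℤ) - (m : ℤ) = k := by
      obtain ⟨j, hj | hj⟩ := Int.eq_nat_or_neg k
      · exact ⟨j, 0, by simp [hj]⟩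
      · exact ⟨0, j, by simp [hj]⟩
    have h := congrArg (fun y : Ell2 => (y : ∀ _ : ℕ, ℂ) m) (H (e n))
    simp only at h
    rw [hmain, hTe] at h
    have hc : ((k : ℂ)) = (n : ℂ) - (m : ℂ) := by
      rw [← hk]; push_cast; ring
    rw [hc, ← hk]
    convert h using 2
    omega
  · -- backward
    intro H x
    have hbasis : ∀ n, adjoint T (C (e n)) = C (T (e n)) := by
      intro n
      apply lp.ext; funext m
      rw [hCe, map_smul]
      have hsm : ((cc θ ξ n • adjoint T (e n) : Ell2) : ∀ _ : ℕ, ℂ) m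
          = cc θ ξ n * (adjoint T (e n)) m := by rw [lp.coeFn_smul]; rfl
      rw [hsm, hadjTe, hCc, hTe]
      -- use the symbol relation at k = m - n
      have h := H ((m : ℤ) - (n : ℤ))
      have hc : (((m : ℤ) - (n : ℤ) : ℤ) : ℂ) = (m : ℂ) - (n : ℂ) := by push_cast; ring
      rw [hc] at h
      have hneg : -((m : ℤ) - (n : ℤ)) = (n : ℤ) - (m : ℤ) := by ring
      rw [hneg] at h
      rw [← h, map_mul, ← Complex.exp_conj]
      have hconj : conj (((m : ℂ) - (n : ℂ)) * (θ : ℂ) * Complex.I)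
          = ((n : ℂ) - (m : ℂ)) * (θ : ℂ) * Complex.I := by
        simp [map_mul, map_sub, Complex.conj_I, Complex.conj_ofReal]
        ring
      rw [hconj, ← mul_assoc, cc_rel]
    -- extend to all x by continuity and antilinearity
    suffices hkey : adjoint T (C x) = C (T x) by
      rw [hkey, hCinv]
    have hs : HasSum (fun n : ℕ => lp.single 2 n (x n)) x :=
      lp.hasSum_single (by norm_num) x
    have hsingle : ∀ n : ℕ, lp.single (E := fun _ : ℕ => ℂ) 2 n (x n) = x n • e n := by
      intro n
      rw [e, ← lp.single_smul]
      norm_num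
    have h1 : HasSum (fun n : ℕ => C (lp.single 2 n (x n))) (C x) :=
      hs.map (AddMonoidHom.mk' C hCadd) hCcont
    have hA : HasSum (fun n : ℕ => adjoint T (C (lp.single 2 n (x n)))) (adjoint T (C x)) :=
      h1.mapL (adjoint T)
    have hB : HasSum (fun n : ℕ => C (T (lp.single 2 n (x n)))) (C (T x)) :=
      (hs.mapL T).map (AddMonoidHom.mk' C hCadd) hCcont
    have hfun : (fun n : ℕ => adjoint T (C (lp.single 2 n (x n))))
        = fun n : ℕ => C (T (lp.single 2 n (x n))) := by
      funext n
      rw [hsingle]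
      calc adjoint T (C (x n • e n)) = conj (x n) • adjoint T (C (e n)) := by
            rw [hCsmul, map_smul]
        _ = conj (x n) • C (T (e n)) := by rw [hbasis]
        _ = C (T (x n • e n)) := by rw [map_smul, hCsmul]
    rw [hfun] at hA
    exact hA.unique hB
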